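/- Trimming a te-lace of size at least three yields a te-lace. That is, if A is a te-lace with at least 3 rows, r is a row of A, and j is in the support of r, then A//(r,j) is a te-lace. -/

import Mathlib

/-- All the nonzero maximal (m×m) subdeterminants of `A` have the same absolute value. -/
def Equimodular {m n : ℕ} (A : Matrix (Fin m) (Fin n) ℚ) : Prop :=
  ∃ d : ℚ, ∀ g : Fin m ↪ Fin n,
    (A.submatrix id g).det ≠ 0 → |(A.submatrix id g).det| = d

/-- Every set of linearly independent rows of `A` forms an equimodular matrix. -/
def TotallyEquimodular {m n : ℕ} (A : Matrix (Fin m) (Fin n) ℚ) : Prop :=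
  ∀ (k : ℕ) (e : Fin k ↪ Fin m),
    LinearIndependent ℚ (fun i => A (e i)) → Equimodular (A.submatrix e id)

/-- All entries of `A` are `0`, `1` or `-1`. -/
def ZeroPmOne {m n : ℕ} (A : Matrix (Fin m) (Fin n) ℚ) : Prop :=
  ∀ i j, A i j = 0 ∨ A i j = 1 ∨ A i j = -1

/-- A linearly independent set of `0,±1` vectors whose matrix is totally equimodular. -/
def TeSet {m n : ℕ} (A : Matrix (Fin m) (Fin n) ℚ) : Prop :=
  ZeroPmOne A ∧ LinearIndependent ℚ (fun i => A i) ∧ TotallyEquimodular A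

/-- A linearly independent set of `0,±1` vectors whose matrix is totally unimodular. -/
def TuSet {m n : ℕ} (A : Matrix (Fin m) (Fin n) ℚ) : Prop :=
  ZeroPmOne A ∧ LinearIndependent ℚ (fun i => A i) ∧ A.IsTotallyUnimodular

/-- A te-set, not a tu-set, all of whose proper subsets of rows are tu-sets. -/
def TeLace {m n : ℕ} (A : Matrix (Fin m) (Fin n) ℚ) : Prop :=
  TeSet A ∧ ¬ TuSet A ∧
    ∀ (k : ℕ) (e : Fin k ↪ Fin m), k < m → TuSet (A.submatrix e id)

/-- Gaussian pivot of `A` at position `(i, j)`. -/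
def pivotAt {m n : ℕ} (A : Matrix (Fin m) (Fin n) ℚ) (i : Fin m) (j : Fin n) :
    Matrix (Fin m) (Fin n) ℚ :=
  Matrix.of fun r c => if r = i then A i c / A i j else A r c - A r j / A i j * A i c

/-- Trim of `A` at `(i, j)`: pivot at `(i, j)`, then delete row `i` and column `j`. -/
def trimAt {m n : ℕ} (A : Matrix (Fin (m + 1)) (Fin (n + 1)) ℚ)
    (i : Fin (m + 1)) (j : Fin (n + 1)) : Matrix (Fin m) (Fin n) ℚ :=
  (pivotAt A i j).submatrix i.succAbove j.succAbove

open Matrix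

/-! ### Determinant machinery for pivoting/trimming -/

def pivE {k : ℕ} (M : Matrix (Fin k) (Fin k) ℚ) (i j : Fin k) : Matrix (Fin k) (Fin k) ℚ :=
  (1 : Matrix (Fin k) (Fin k) ℚ).updateCol i
    (fun r => if r = i then (M i j)⁻¹ else -(M r j / M i j))

lemma det_pivE {k : ℕ} (M : Matrix (Fin k) (Fin k) ℚ) (i j : Fin k) :
    (pivE M i j).det = (M i j)⁻¹ := by
  have h2 : Matrix.cramer (1 : Matrix (Fin k) (Fin k) ℚ)
      (fun r => if r = i then (M i j)⁻¹ else -(M r j / M i j)) i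
      = (M i j)⁻¹ := by rw [Matrix.cramer_one]; simp
  rw [Matrix.cramer_apply] at h2
  exact h2

lemma pivot_eq_mul {k : ℕ} (M : Matrix (Fin k) (Fin k) ℚ) (i j : Fin k) :
    pivotAt M i j = pivE M i j * M := by
  ext r c
  rw [Matrix.mul_apply]
  by_cases hr : r = i
  · subst hr
    have : ∀ s, pivE M r j r s * M s c = if s = r then (M r j)⁻¹ * M r c else 0 := by
      intro s
      simp only [pivE, Matrix.updateCol_apply, Matrix.one_apply]
      by_cases hs : s = r
      · subst hs; simp
      · simp [hs, Ne.symm hs]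
    rw [Finset.sum_congr rfl (fun s _ => this s), Finset.sum_ite_eq' Finset.univ r]
    simp [pivotAt, div_eq_inv_mul]
  · have : ∀ s, pivE M i j r s * M s c =
        (if s = i then -(M r j / M i j) * M i c else 0) + (if s = r then M r c else 0) := by
      intro s
      simp only [pivE, Matrix.updateCol_apply, Matrix.one_apply]
      by_cases hs : s = i
      · subst hs; simp [Ne.symm hr, hr]
      · by_cases hs2 : r = s
        · subst hs2; simp [hs]
        · have hs3 : ¬ s = r := fun h => hs2 h.symm
          simp [hs, hs2, hs3]
    rw [Finset.sum_congr rfl (fun s _ => this s), Finset.sum_add_distrib,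
      Finset.sum_ite_eq' Finset.univ i, Finset.sum_ite_eq' Finset.univ r]
    simp [pivotAt, hr]
    ring

lemma det_pivotAt {k : ℕ} (M : Matrix (Fin k) (Fin k) ℚ) (i j : Fin k) :
    (pivotAt M i j).det = (M i j)⁻¹ * M.det := by
  rw [pivot_eq_mul, Matrix.det_mul, det_pivE]

lemma pivot_col {m n : ℕ} (A : Matrix (Fin m) (Fin n) ℚ) (i : Fin m) (j : Fin n)
    (h : A i j ≠ 0) (r : Fin m) : pivotAt A i j r j = if r = i then 1 else 0 := by
  by_cases hr : r = i <;> simp [pivotAt, hr, div_self h]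
  field_simp
  simp

lemma det_trim_square {k : ℕ} (M : Matrix (Fin (k+1)) (Fin (k+1)) ℚ) (i j : Fin (k+1))
    (h : M i j ≠ 0) : |(trimAt M i j).det| = |M.det| / |M i j| := by
  have hP := Matrix.det_succ_column (pivotAt M i j) j
  have hcollapse : ∀ r : Fin (k+1), r ∈ Finset.univ → r ≠ i →
      (-1 : ℚ) ^ (r + j : ℕ) * (pivotAt M i j) r j *
        ((pivotAt M i j).submatrix r.succAbove j.succAbove).det = 0 := by
    intro r _ hr
    rw [pivot_col M i j h r, if_neg hr]; ring
  rw [Finset.sum_eq_single i hcollapse (by simp)] at hP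
  rw [pivot_col M i j h i, if_pos rfl, mul_one] at hP
  have hdp : (pivotAt M i j).det = (M i j)⁻¹ * M.det := det_pivotAt M i j
  rw [hdp] at hP
  have habs := congrArg abs hP
  rw [abs_mul, abs_mul, abs_inv] at habs
  have h1 : |(-1 : ℚ) ^ (i + j : ℕ)| = 1 := by
    rw [abs_pow, abs_neg, abs_one, one_pow]
  rw [h1, one_mul] at habs
  rw [trimAt, ← habs, div_eq_inv_mul]

def consF {k l : ℕ} (i : Fin (l+1)) (e : Fin k → Fin l) : Fin (k+1) → Fin (l+1) :=
  Fin.cons i (i.succAbove ∘ e)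

lemma consF_inj {k l : ℕ} {i : Fin (l+1)} {e : Fin k → Fin l} (he : Function.Injective e) :
    Function.Injective (consF i e) := by
  intro a b hab
  simp only [consF, Fin.cons_zero, Fin.cons_succ, Function.comp_apply] at hab
  induction a using Fin.cases with
  | zero =>
    induction b using Fin.cases with
    | zero => rfl
    | succ b =>
      rw [Fin.cons_zero, Fin.cons_succ] at hab
      exact absurd hab.symm (Fin.succAbove_ne i (e b))
  | succ a =>
    induction b using Fin.cases with
    | zero =>
      rw [Fin.cons_succ, Fin.cons_zero] at hab
      exact absurd hab (Fin.succAbove_ne i (e a))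
    | succ b =>
      rw [Fin.cons_succ, Fin.cons_succ] at hab
      exact congrArg Fin.succ (he (Fin.succAbove_right_injective hab))

lemma trim_submatrix {m n : ℕ} (A : Matrix (Fin (m + 1)) (Fin (n + 1)) ℚ)
    (i : Fin (m + 1)) (j : Fin (n + 1)) {k : ℕ} (e : Fin k → Fin m) (g : Fin k → Fin n) :
    (trimAt A i j).submatrix e g = trimAt (A.submatrix (consF i e) (consF j g)) 0 0 := by
  ext a b
  simp only [trimAt, pivotAt, Matrix.submatrix_apply, Matrix.of_apply, consF,
    Fin.zero_succAbove, Fin.cons_succ, Fin.cons_zero, Fin.succAbove_ne i (e a)]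
  simp [Fin.succ_ne_zero a]

lemma key_abs {m n : ℕ} (A : Matrix (Fin (m + 1)) (Fin (n + 1)) ℚ)
    (i : Fin (m + 1)) (j : Fin (n + 1)) (h1 : |A i j| = 1)
    {k : ℕ} (e : Fin k → Fin m) (g : Fin k → Fin n) :
    |((trimAt A i j).submatrix e g).det| = |(A.submatrix (consF i e) (consF j g)).det| := by
  have hij : A i j ≠ 0 := by intro h; rw [h] at h1; simp at h1
  have h00 : (A.submatrix (consF i e) (consF j g)) 0 0 = A i j := by
    simp [consF]
  rw [trim_submatrix, det_trim_square _ 0 0 (by rw [h00]; exact hij), h00, h1, div_one]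

/-! ### Small helpers about `Set.range SignType.cast` -/

lemma mem_signRange_iff {x : ℚ} :
    x ∈ Set.range (SignType.cast : SignType → ℚ) ↔ x = 0 ∨ x = 1 ∨ x = -1 := by
  constructor
  · rintro ⟨s, rfl⟩
    cases s <;> simp
  · rintro (rfl | rfl | rfl)
    exacts [⟨0, rfl⟩, ⟨1, rfl⟩, ⟨-1, by simp⟩]

lemma abs_of_signRange {x : ℚ} (hx : x ∈ Set.range (SignType.cast : SignType → ℚ)) :
    |x| = 0 ∨ |x| = 1 := by
  rcases mem_signRange_iff.mp hx with rfl | rfl | rfl <;> simp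

lemma signRange_of_abs {x y : ℚ} (h : |x| = |y|)
    (hy : y ∈ Set.range (SignType.cast : SignType → ℚ)) :
    x ∈ Set.range (SignType.cast : SignType → ℚ) := by
  rw [mem_signRange_iff]
  rcases mem_signRange_iff.mp hy with rfl | rfl | rfl
  · left; exact abs_eq_zero.mp (by simpa using h)
  · rcases abs_eq (by norm_num : (0:ℚ) ≤ 1) |>.mp (by simpa using h) with h' | h'
    · right; left; exact h'
    · right; right; exact h'
  · rcases abs_eq (by norm_num : (0:ℚ) ≤ 1) |>.mp (by simpa using h) with h' | h'
    · right; left; exact h'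
    · right; right; exact h'

/-! ### Subdeterminants of the trim coming from proper subsets of rows -/

lemma sub_tu {m n : ℕ} {A : Matrix (Fin (m + 1)) (Fin (n + 1)) ℚ}
    (hA : TeLace A) {i : Fin (m + 1)} {j : Fin (n + 1)} (h1 : |A i j| = 1)
    {k : ℕ} (e : Fin k → Fin m) (g : Fin k → Fin n)
    (he : Function.Injective e) (hg : Function.Injective g) (hk : k < m) :
    ((trimAt A i j).submatrix e g).det ∈ Set.range (SignType.cast : SignType → ℚ) := by
  obtain ⟨_, _, hproper⟩ := hA
  have htu := (hproper (k+1) ⟨consF i e, consF_inj he⟩ (by omega)).2.2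
  have hmem := htu (k+1) id (consF j g) Function.injective_id (consF_inj hg)
  rw [Matrix.submatrix_submatrix] at hmem
  simp only [Function.comp_id, Function.id_comp] at hmem
  exact signRange_of_abs (key_abs A i j h1 e g) hmem

lemma consF_id_bijective {l : ℕ} (i : Fin (l+1)) :
    Function.Bijective (consF i (id : Fin l → Fin l)) :=
  (Finite.injective_iff_bijective).mp (consF_inj Function.injective_id)

lemma abs_det_perm_rows {l : ℕ} (M : Matrix (Fin l) (Fin l) ℚ) (σ : Equiv.Perm (Fin l)) :
    |(M.submatrix σ id).det| = |M.det| := by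
  rw [Matrix.det_permute]
  rcases Int.units_eq_one_or (Equiv.Perm.sign σ) with h | h <;>
    rw [h] <;> simp

lemma abs_det_perm_cols {l : ℕ} (M : Matrix (Fin l) (Fin l) ℚ) (σ : Equiv.Perm (Fin l)) :
    |(M.submatrix id σ).det| = |M.det| := by
  rw [Matrix.det_permute']
  rcases Int.units_eq_one_or (Equiv.Perm.sign σ) with h | h <;>
    rw [h] <;> simp

lemma trim_apply {m n : ℕ} (A : Matrix (Fin (m + 1)) (Fin (n + 1)) ℚ)
    (i : Fin (m + 1)) (j : Fin (n + 1)) (r : Fin m) (b : Fin n) :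
    trimAt A i j r b = A (i.succAbove r) (j.succAbove b)
      - A (i.succAbove r) j / A i j * A i (j.succAbove b) := by
  simp only [trimAt, pivotAt, Matrix.submatrix_apply, Matrix.of_apply,
    if_neg (Fin.succAbove_ne i r)]

lemma trim_li {m n : ℕ} {A : Matrix (Fin (m + 1)) (Fin (n + 1)) ℚ}
    {i : Fin (m + 1)} {j : Fin (n + 1)} (hij : A i j ≠ 0)
    (hLI : LinearIndependent ℚ (fun r => A r)) :
    LinearIndependent ℚ (fun r => trimAt A i j r) := by
  rw [Fintype.linearIndependent_iff]
  intro c hc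
  set α : ℚ := -(∑ r, c r * A (i.succAbove r) j) / A i j with hα
  have hli2 : LinearIndependent ℚ ((fun r => A r) ∘ consF i (id : Fin m → Fin m)) :=
    hLI.comp _ (consF_inj Function.injective_id)
  rw [Fintype.linearIndependent_iff] at hli2
  have hz : ∑ t, (Fin.cons α c : Fin (m+1) → ℚ) t • ((fun r => A r) ∘ consF i id) t = 0 := by
    funext cc
    rw [Finset.sum_apply]
    rw [Fin.sum_univ_succ]
    simp only [Fin.cons_zero, Fin.cons_succ, Function.comp_apply, consF,
      Pi.smul_apply, smul_eq_mul, Pi.zero_apply]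
    by_cases hcc : cc = j
    · subst hcc
      rw [hα]
      field_simp
      simp
    · obtain ⟨b, rfl⟩ := Fin.exists_succAbove_eq hcc
      have hcb := congrFun hc b
      rw [Finset.sum_apply] at hcb
      simp only [Pi.smul_apply, smul_eq_mul, Pi.zero_apply, trim_apply] at hcb
      have hexp : ∑ r, c r * (A (i.succAbove r) (j.succAbove b)
          - A (i.succAbove r) j / A i j * A i (j.succAbove b))
          = (∑ r, c r * A (i.succAbove r) (j.succAbove b))
            - (∑ r, c r * A (i.succAbove r) j) * (A i (j.succAbove b) / A i j) := by
        rw [Finset.sum_mul, ← Finset.sum_sub_distrib]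
        exact Finset.sum_congr rfl fun r _ => by ring
      rw [hexp] at hcb
      rw [hα]
      field_simp
      field_simp at hcb
      simp only [id_eq]
      linarith [hcb]
  have hall := hli2 (Fin.cons α c) hz
  intro r
  have := hall r.succ
  rwa [Fin.cons_succ] at this

lemma trim_te {m n : ℕ} {A : Matrix (Fin (m + 1)) (Fin (n + 1)) ℚ}
    {i : Fin (m + 1)} {j : Fin (n + 1)} (h1 : |A i j| = 1)
    (hLI : LinearIndependent ℚ (fun r => A r)) (hTE : TotallyEquimodular A) :
    TotallyEquimodular (trimAt A i j) := by
  intro k e _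
  obtain ⟨d, hd⟩ := hTE (k+1) ⟨consF i ⇑e, consF_inj e.injective⟩
    (hLI.comp _ (consF_inj e.injective))
  refine ⟨d, fun g hg => ?_⟩
  rw [Matrix.submatrix_submatrix, Function.comp_id, Function.id_comp] at hg ⊢
  have hkey := key_abs A i j h1 ⇑e ⇑g
  have hd2 := hd ⟨consF j ⇑g, consF_inj g.injective⟩
  rw [Matrix.submatrix_submatrix, Function.comp_id, Function.id_comp] at hd2
  have hAne : (A.submatrix (consF i ⇑e) (consF j ⇑g)).det ≠ 0 := by
    intro h0
    rw [h0, abs_zero, abs_eq_zero] at hkey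
    exact hg hkey
  rw [hkey]
  exact hd2 hAne

lemma exchange {l n : ℕ} (A : Matrix (Fin l) (Fin (n+1)) ℚ) (j : Fin (n+1))
    (g : Fin l → Fin (n+1)) (hg : Function.Injective g)
    (hdet : (A.submatrix id g).det ≠ 0) (r0 : Fin l) (hr0 : A r0 j ≠ 0) :
    ∃ G : Fin l → Fin (n+1), Function.Injective G ∧ (∃ c, G c = j) ∧
      (A.submatrix id G).det ≠ 0 := by
  by_cases hj : ∃ c, g c = j
  · exact ⟨g, hg, hj, hdet⟩
  · push_neg at hj
    set N := A.submatrix id g with hN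
    have hNu : IsUnit N.det := isUnit_iff_ne_zero.mpr hdet
    set lam := N⁻¹.mulVec (fun r => A r j) with hlam
    have hNl : N.mulVec lam = fun r => A r j := by
      rw [hlam, Matrix.mulVec_mulVec, Matrix.mul_nonsing_inv _ hNu, Matrix.one_mulVec]
    have hlamne : ∃ c, lam c ≠ 0 := by
      by_contra hno; push_neg at hno
      have hl0 : lam = 0 := funext hno
      rw [hl0, Matrix.mulVec_zero] at hNl
      exact hr0 (congrFun hNl.symm r0)
    obtain ⟨c, hc⟩ := hlamne
    refine ⟨Function.update g c j, ?_, ⟨c, Function.update_self c j g⟩, ?_⟩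
    · intro a b hab
      by_cases ha : a = c <;> by_cases hb : b = c
      · rw [ha, hb]
      · rw [ha, Function.update_self, Function.update_of_ne hb] at hab
        exact absurd hab.symm (hj b)
      · rw [hb, Function.update_self, Function.update_of_ne ha] at hab
        exact absurd hab (hj a)
      · rw [Function.update_of_ne ha, Function.update_of_ne hb] at hab
        exact hg hab
    · have hupd : A.submatrix id (Function.update g c j)
          = N.updateCol c (fun r => A r j) := by
        ext r s
        rw [Matrix.updateCol_apply, Matrix.submatrix_apply, Function.update_apply]
        by_cases hs : s = c <;> simp [hs, hN]
      rw [hupd, ← Matrix.cramer_apply, ← hNl, Matrix.cramer_eq_adjugate_mulVec,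
        Matrix.mulVec_mulVec, Matrix.adjugate_mul, Matrix.smul_mulVec,
        Matrix.one_mulVec]
      simp only [Pi.smul_apply, smul_eq_mul]
      exact mul_ne_zero hdet hc

lemma trim_not_tu {m n : ℕ} {A : Matrix (Fin (m + 1)) (Fin (n + 1)) ℚ}
    {i : Fin (m + 1)} {j : Fin (n + 1)} (hA : TeLace A) (h1 : |A i j| = 1)
    (hij : A i j ≠ 0) :
    ¬ (trimAt A i j).IsTotallyUnimodular := by
  obtain ⟨⟨hZ, hLI, hTE⟩, hnotTU, hproper⟩ := hA
  have hAnotTU : ¬ A.IsTotallyUnimodular := fun h => hnotTU ⟨hZ, hLI, h⟩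
  rw [Matrix.IsTotallyUnimodular] at hAnotTU
  push_neg at hAnotTU
  obtain ⟨k, f, g, hf, hg, hdet⟩ := hAnotTU
  have hk1 : k ≤ m + 1 := by simpa using Fintype.card_le_of_injective f hf
  have hk : k = m + 1 := by
    by_contra hne
    have hklt : k < m + 1 := lt_of_le_of_ne hk1 hne
    have := (hproper k ⟨f, hf⟩ hklt).2.2 k id g Function.injective_id hg
    rw [Matrix.submatrix_submatrix, Function.comp_id, Function.id_comp] at this
    exact hdet this
  subst hk
  have hfb : Function.Bijective f := Finite.injective_iff_bijective.mp hf
  have hsub : A.submatrix f g = (A.submatrix id g).submatrix (Equiv.ofBijective f hfb) id := rfl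
  have habsfg : |(A.submatrix f g).det| = |(A.submatrix id g).det| := by
    rw [hsub]; exact abs_det_perm_rows _ _
  have hgdet : (A.submatrix id g).det ≠ 0 := by
    intro h0
    rw [h0, abs_zero, abs_eq_zero] at habsfg
    exact hdet (by rw [habsfg]; exact ⟨0, rfl⟩)
  obtain ⟨d, hd⟩ := hTE (m + 1) (Function.Embedding.refl _) hLI
  have hrefl : A.submatrix (⇑(Function.Embedding.refl (Fin (m + 1)))) id = A := by
    ext r s; rfl
  rw [hrefl] at hd
  have hdapp : ∀ (G : Fin (m + 1) → Fin (n + 1)), Function.Injective G →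
      (A.submatrix id G).det ≠ 0 → |(A.submatrix id G).det| = d := by
    intro G hG hGd
    exact hd ⟨G, hG⟩ hGd
  have hd_g : |(A.submatrix id g).det| = d := hdapp g hg hgdet
  have hdne0 : d ≠ 0 := by
    intro h0
    rw [h0] at hd_g
    exact hgdet (abs_eq_zero.mp hd_g)
  have hdne1 : d ≠ 1 := by
    intro h01
    rw [h01, ← habsfg] at hd_g
    exact hdet (signRange_of_abs (by rw [hd_g]; simp) ⟨1, rfl⟩)
  obtain ⟨G, hG, ⟨c, hGc⟩, hGdet⟩ := exchange A j g hg hgdet i hij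
  have hdG : |(A.submatrix id G).det| = d := hdapp G hG hGdet
  have hch : ∀ a : Fin m, ∃ z, j.succAbove z = G (c.succAbove a) := by
    intro a
    refine Fin.exists_succAbove_eq (fun h => Fin.succAbove_ne c a (hG (h.trans hGc.symm)))
  choose h' hh' using hch
  have hh'inj : Function.Injective h' := by
    intro a b hab
    have h2 : j.succAbove (h' a) = j.succAbove (h' b) := congrArg _ hab
    rw [hh', hh'] at h2
    exact Fin.succAbove_right_injective (hG h2)
  have hcols : consF j h' = G ∘ consF c (id : Fin m → Fin m) := by
    funext t
    induction t using Fin.cases with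
    | zero => simp [consF, hGc.symm]
    | succ a => simp [consF, hh' a]
  intro hTU
  have hmem := hTU m id h' Function.injective_id hh'inj
  have hkey := key_abs A i j h1 (id : Fin m → Fin m) h'
  rw [hcols] at hkey
  have hEq : A.submatrix (consF i (id : Fin m → Fin m)) (G ∘ consF c (id : Fin m → Fin m))
      = ((A.submatrix id G).submatrix id
          (Equiv.ofBijective _ (consF_id_bijective c))).submatrix
            (Equiv.ofBijective _ (consF_id_bijective i)) id := rfl
  rw [hEq, abs_det_perm_rows, abs_det_perm_cols, hdG] at hkey
  rcases abs_of_signRange hmem with h0 | h01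
  · rw [hkey] at h0; exact hdne0 h0
  · rw [hkey] at h01; exact hdne1 h01

theorem stmt6 {m n : ℕ} (A : Matrix (Fin (m + 1)) (Fin (n + 1)) ℚ)
    (hA : TeLace A) (hsize : 3 ≤ m + 1) (i : Fin (m + 1)) (j : Fin (n + 1))
    (hij : A i j ≠ 0) : TeLace (trimAt A i j) := by
  have hm : 2 ≤ m := by omega
  obtain ⟨⟨hZ, hLI, hTE⟩, hnotTU, hproper⟩ := hA
  have hlace : TeLace A := ⟨⟨hZ, hLI, hTE⟩, hnotTU, hproper⟩
  have h1 : |A i j| = 1 := by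
    rcases hZ i j with h | h | h
    · exact absurd h hij
    · rw [h]; norm_num
    · rw [h]; norm_num
  have hBZ : ZeroPmOne (trimAt A i j) := by
    intro r b
    have hmem := sub_tu hlace h1 (fun _ : Fin 1 => r) (fun _ : Fin 1 => b)
      (fun a b _ => Subsingleton.elim a b) (fun a b _ => Subsingleton.elim a b)
      (by omega)
    rw [Matrix.det_fin_one] at hmem
    exact mem_signRange_iff.mp hmem
  have hBli := trim_li hij hLI
  refine ⟨⟨hBZ, hBli, trim_te h1 hLI hTE⟩, fun h => trim_not_tu hlace h1 hij h.2.2, ?_⟩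
  intro k e hk
  refine ⟨?_, hBli.comp _ e.injective, ?_⟩
  · intro a b
    exact hBZ (e a) b
  · intro l f g hf hg
    rw [Matrix.submatrix_submatrix, Function.id_comp]
    have hl : l ≤ k := by simpa using Fintype.card_le_of_injective f hf
    exact sub_tu hlace h1 (⇑e ∘ f) g (e.injective.comp hf) hg (lt_of_le_of_lt hl hk)
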